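/- In H(n,k,p), the expected number X_r of star-collisions of support size r (unordered pairs {u,v} with Γ(u) = Γ(v), |Γ(u)| = r) equals C(n,2) · C(C(n−2,k−2), r) · p^r · (1−p)^{2·C(n−2,k−1) + C(n−2,k−2) − r}. -/

import Mathlib

/-- All `k`-element subsets of `[n]`, the possible hyperedges of a `k`-uniform
hypergraph on `n` vertices. -/
def kSets (n k : ℕ) : Finset (Finset (Fin n)) :=
  (Finset.univ : Finset (Fin n)).powersetCard k

/-- The probability, in the random hypergraph `H(n,k,p)` where each `k`-subset is a
hyperedge independently with probability `p`, of a given edge set `E`. -/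
noncomputable def hweight (n k : ℕ) (p : ℝ) (E : Finset (Finset (Fin n))) : ℝ :=
  if E ⊆ kSets n k then p ^ E.card * (1 - p) ^ ((kSets n k).card - E.card) else 0

open Classical in
/-- The probability of an event `A` under `H(n,k,p)`. -/
noncomputable def hprob (n k : ℕ) (p : ℝ) (A : Finset (Finset (Fin n)) → Prop) : ℝ :=
  ∑ E : Finset (Finset (Fin n)), if A E then hweight n k p E else 0

/-- The expectation of a random variable `f` under `H(n,k,p)`. -/
noncomputable def hexp (n k : ℕ) (p : ℝ) (f : Finset (Finset (Fin n)) → ℝ) : ℝ :=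
  ∑ E : Finset (Finset (Fin n)), hweight n k p E * f E

/-- The star of a vertex `v`: the set of hyperedges of `E` containing `v`. -/
def hstar {n : ℕ} (E : Finset (Finset (Fin n))) (v : Fin n) : Finset (Finset (Fin n)) :=
  E.filter (fun e => v ∈ e)

/-- `X_r`: the number of unordered pairs of (distinct) vertices with identical stars of
size exactly `r` (star-collisions of support size `r`). -/
def Xr (n r : ℕ) (E : Finset (Finset (Fin n))) : ℕ :=
  ((Finset.univ : Finset (Fin n)).powersetCard 2 |>.filter
    (fun P => (∀ u ∈ P, ∀ v ∈ P, hstar E u = hstar E v) ∧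
      ∀ u ∈ P, (hstar E u).card = r)).card

section Aux

open Finset

variable {α : Type*} [DecidableEq α]

/-- Bernoulli normalization: total weight over all subsets is 1. -/
lemma bern_sum (p : ℝ) (s : Finset α) :
    ∑ F ∈ s.powerset, p ^ F.card * (1 - p) ^ (s.card - F.card) = 1 := by
  induction s using Finset.induction with
  | empty => simp
  | insert a s ha ih =>
    rw [Finset.powerset_insert, Finset.sum_union]
    · have h1 : ∑ F ∈ s.powerset, p ^ F.card *
          (1 - p) ^ ((insert a s).card - F.card)
          = (1 - p) * ∑ F ∈ s.powerset, p ^ F.card * (1 - p) ^ (s.card - F.card) := by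
        rw [Finset.mul_sum]
        refine Finset.sum_congr rfl fun F hF => ?_
        rw [Finset.mem_powerset] at hF
        have hc : F.card ≤ s.card := Finset.card_le_card hF
        rw [Finset.card_insert_of_notMem ha]
        have h : s.card + 1 - F.card = (s.card - F.card) + 1 := by omega
        rw [h, pow_succ]; ring
      have h2 : ∑ F ∈ s.powerset.image (insert a), p ^ F.card *
          (1 - p) ^ ((insert a s).card - F.card)
          = p * ∑ F ∈ s.powerset, p ^ F.card * (1 - p) ^ (s.card - F.card) := by
        rw [Finset.sum_image (fun x hx y hy hxy => by
          rw [Finset.mem_coe, Finset.mem_powerset] at hx hy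
          have hax : a ∉ x := fun h => ha (hx h)
          have hay : a ∉ y := fun h => ha (hy h)
          rw [← Finset.erase_insert hax, ← Finset.erase_insert hay, hxy]),
          Finset.mul_sum]
        refine Finset.sum_congr rfl fun F hF => ?_
        rw [Finset.mem_powerset] at hF
        have haF : a ∉ F := fun h => ha (hF h)
        rw [Finset.card_insert_of_notMem haF, Finset.card_insert_of_notMem ha]
        have h : s.card + 1 - (F.card + 1) = s.card - F.card := by omega
        rw [h, pow_succ]; ring
      rw [h1, h2, ih]; ring
    · rw [Finset.disjoint_right]
      intro F hF hF'
      simp only [Finset.mem_image, Finset.mem_powerset] at hF hF'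
      obtain ⟨x, hx, rfl⟩ := hF
      exact ha (hF' (Finset.mem_insert_self a x))

/-- Key lemma: the weighted sum of an event depending only on `E ∩ T` reduces
to a Bernoulli sum over subsets of `T`. -/
lemma key [Fintype α] (p : ℝ) (Ω T : Finset α) (hT : T ⊆ Ω)
    (Q : Finset α → Prop) [DecidablePred Q] :
    ∑ E : Finset α, (if E ⊆ Ω then p ^ E.card * (1 - p) ^ (Ω.card - E.card) else 0) *
        (if Q (E ∩ T) then (1 : ℝ) else 0)
      = ∑ S ∈ T.powerset.filter Q, p ^ S.card * (1 - p) ^ (T.card - S.card) := by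
  classical
  have step1 : ∑ E : Finset α,
      (if E ⊆ Ω then p ^ E.card * (1 - p) ^ (Ω.card - E.card) else 0) *
        (if Q (E ∩ T) then (1 : ℝ) else 0)
      = ∑ E ∈ Ω.powerset, p ^ E.card * (1 - p) ^ (Ω.card - E.card) *
        (if Q (E ∩ T) then (1 : ℝ) else 0) := by
    rw [← Finset.sum_subset (Finset.subset_univ Ω.powerset)
      (fun E _ hE => by
        rw [Finset.mem_powerset] at hE
        rw [if_neg hE, zero_mul])]
    refine Finset.sum_congr rfl fun E hE => ?_
    rw [Finset.mem_powerset] at hE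
    rw [if_pos hE]
  rw [step1]
  have step2 : ∑ E ∈ Ω.powerset, p ^ E.card * (1 - p) ^ (Ω.card - E.card) *
        (if Q (E ∩ T) then (1 : ℝ) else 0)
      = ∑ q ∈ T.powerset ×ˢ (Ω \ T).powerset,
          (p ^ q.1.card * (1 - p) ^ (T.card - q.1.card) *
            (if Q q.1 then (1 : ℝ) else 0)) *
          (p ^ q.2.card * (1 - p) ^ ((Ω \ T).card - q.2.card)) := by
    refine Finset.sum_nbij' (fun E => (E ∩ T, E \ T)) (fun q => q.1 ∪ q.2)
      ?_ ?_ ?_ ?_ ?_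
    · intro E hE
      rw [Finset.mem_powerset] at hE
      simp only [Finset.mem_product, Finset.mem_powerset]
      exact ⟨Finset.inter_subset_right, Finset.sdiff_subset_sdiff hE le_rfl⟩
    · intro q hq
      simp only [Finset.mem_product, Finset.mem_powerset] at hq
      rw [Finset.mem_powerset]
      exact Finset.union_subset (hq.1.trans hT) (hq.2.trans (Finset.sdiff_subset))
    · intro E _
      exact sup_inf_sdiff E T
    · intro q hq
      simp only [Finset.mem_product, Finset.mem_powerset] at hq
      have h1 : Disjoint q.2 T := Finset.disjoint_of_subset_left hq.2 sdiff_disjoint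
      ext x
      · simp only [Finset.mem_inter, Finset.mem_union]
        constructor
        · rintro ⟨h | h, ht⟩
          · exact h
          · exact absurd ht (Finset.disjoint_left.mp h1 h)
        · intro h; exact ⟨Or.inl h, hq.1 h⟩
      · simp only [Finset.mem_sdiff, Finset.mem_union]
        constructor
        · rintro ⟨h | h, ht⟩
          · exact absurd (hq.1 h) ht
          · exact h
        · intro h; exact ⟨Or.inr h, Finset.disjoint_left.mp h1 h⟩
    · intro E hE
      rw [Finset.mem_powerset] at hE
      have hcard : (E ∩ T).card + (E \ T).card = E.card :=
        Finset.card_inter_add_card_sdiff E T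
      have h1 : (E ∩ T).card ≤ T.card := Finset.card_le_card Finset.inter_subset_right
      have h2 : (E \ T).card ≤ (Ω \ T).card :=
        Finset.card_le_card (Finset.sdiff_subset_sdiff hE le_rfl)
      have hΩ : T.card + (Ω \ T).card = Ω.card := by
        have := Finset.card_le_card hT
        rw [Finset.card_sdiff_of_subset hT]; omega
      have hexp : Ω.card - E.card = (T.card - (E ∩ T).card) + ((Ω \ T).card - (E \ T).card) := by
        have hE' : E.card ≤ Ω.card := Finset.card_le_card hE
        omega
      rw [hexp, ← hcard, pow_add, pow_add]
      ring
  rw [step2, Finset.sum_product]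
  have step3 : ∀ S ∈ T.powerset,
      ∑ F ∈ (Ω \ T).powerset,
        (p ^ S.card * (1 - p) ^ (T.card - S.card) * (if Q S then (1 : ℝ) else 0)) *
          (p ^ F.card * (1 - p) ^ ((Ω \ T).card - F.card))
      = p ^ S.card * (1 - p) ^ (T.card - S.card) * (if Q S then (1 : ℝ) else 0) := by
    intro S _
    rw [← Finset.mul_sum, bern_sum, mul_one]
  rw [Finset.sum_congr rfl step3, Finset.sum_filter]
  refine Finset.sum_congr rfl fun S _ => ?_
  by_cases h : Q S <;> simp [h]

/-- Counting `k`-subsets of `Fin n` containing `s` and disjoint from `t`. -/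
lemma count (n k : ℕ) (s t : Finset (Fin n)) (hst : Disjoint s t) (hs : s.card ≤ k) :
    (((Finset.univ : Finset (Fin n)).powersetCard k).filter
        (fun e => s ⊆ e ∧ Disjoint t e)).card
      = (n - s.card - t.card).choose (k - s.card) := by
  classical
  have hcard : (((Finset.univ : Finset (Fin n)) \ s) \ t).card = n - s.card - t.card := by
    rw [Finset.card_sdiff_of_subset (by
      rw [Finset.subset_sdiff]
      exact ⟨Finset.subset_univ t, hst.symm⟩),
      Finset.card_sdiff_of_subset (Finset.subset_univ s), Finset.card_univ, Fintype.card_fin]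
  rw [← hcard, ← Finset.card_powersetCard]
  refine Finset.card_nbij' (fun e => e \ s) (fun S => S ∪ s) ?_ ?_ ?_ ?_
  · intro e he
    simp only [Finset.mem_coe, Finset.mem_filter, Finset.mem_powersetCard] at he
    obtain ⟨⟨_, hek⟩, hse, hte⟩ := he
    rw [Finset.mem_coe, Finset.mem_powersetCard]
    constructor
    · rw [Finset.subset_sdiff]
      constructor
      · rw [Finset.subset_sdiff]
        exact ⟨Finset.subset_univ _, Finset.sdiff_disjoint⟩
      · exact Finset.disjoint_of_subset_left Finset.sdiff_subset hte.symm
    · rw [Finset.card_sdiff_of_subset hse, hek]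
  · intro S hS
    rw [Finset.mem_coe, Finset.mem_powersetCard] at hS
    obtain ⟨hSsub, hScard⟩ := hS
    rw [Finset.subset_sdiff, Finset.subset_sdiff] at hSsub
    obtain ⟨⟨_, hSs⟩, hSt⟩ := hSsub
    simp only [Finset.mem_coe, Finset.mem_filter, Finset.mem_powersetCard]
    refine ⟨⟨Finset.subset_univ _, ?_⟩, Finset.subset_union_right, ?_⟩
    · rw [Finset.card_union_of_disjoint hSs, hScard]
      omega
    · rw [Finset.disjoint_union_right]
      exact ⟨hSt.symm, hst.symm⟩
  · intro e he
    simp only [Finset.mem_coe, Finset.mem_filter, Finset.mem_powersetCard] at he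
    exact Finset.sdiff_union_of_subset he.2.1
  · intro S hS
    rw [Finset.mem_coe, Finset.mem_powersetCard] at hS
    rw [Finset.subset_sdiff, Finset.subset_sdiff] at hS
    exact Finset.union_sdiff_cancel_right hS.1.1.2

end Aux

/-- The star-collision condition for a pair `u v` depends only on the edges
containing `u` or `v`. -/
lemma cond_iff {n : ℕ} (E : Finset (Finset (Fin n))) (u v : Fin n) (r : ℕ) :
    (hstar E u = hstar E v ∧ (hstar E u).card = r) ↔
    ((∀ e ∈ E.filter (fun e => u ∈ e ∨ v ∈ e), u ∈ e ∧ v ∈ e) ∧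
      (E.filter (fun e => u ∈ e ∨ v ∈ e)).card = r) := by
  constructor
  · rintro ⟨h1, h2⟩
    have hkey : ∀ e ∈ E, (u ∈ e ↔ v ∈ e) := by
      intro e he
      constructor
      · intro hu
        have h : e ∈ hstar E u := Finset.mem_filter.mpr ⟨he, hu⟩
        rw [h1] at h; exact (Finset.mem_filter.mp h).2
      · intro hv
        have h : e ∈ hstar E v := Finset.mem_filter.mpr ⟨he, hv⟩
        rw [← h1] at h; exact (Finset.mem_filter.mp h).2
    have heq : E.filter (fun e => u ∈ e ∨ v ∈ e) = hstar E u := by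
      ext e
      simp only [Finset.mem_filter, hstar]
      constructor
      · rintro ⟨he, h | h⟩
        exacts [⟨he, h⟩, ⟨he, (hkey e he).mpr h⟩]
      · rintro ⟨he, h⟩; exact ⟨he, Or.inl h⟩
    refine ⟨?_, by rw [heq]; exact h2⟩
    intro e he
    rw [Finset.mem_filter] at he
    rcases he with ⟨he, h | h⟩
    · exact ⟨h, (hkey e he).mp h⟩
    · exact ⟨(hkey e he).mpr h, h⟩
  · rintro ⟨h1, h2⟩
    have hu : hstar E u = E.filter (fun e => u ∈ e ∨ v ∈ e) := by
      ext e
      simp only [Finset.mem_filter, hstar]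
      constructor
      · rintro ⟨he, h⟩; exact ⟨he, Or.inl h⟩
      · rintro ⟨he, h⟩; exact ⟨he, (h1 e (Finset.mem_filter.mpr ⟨he, h⟩)).1⟩
    have hv : hstar E v = E.filter (fun e => u ∈ e ∨ v ∈ e) := by
      ext e
      simp only [Finset.mem_filter, hstar]
      constructor
      · rintro ⟨he, h⟩; exact ⟨he, Or.inr h⟩
      · rintro ⟨he, h⟩; exact ⟨he, (h1 e (Finset.mem_filter.mpr ⟨he, h⟩)).2⟩
    exact ⟨by rw [hu, hv], by rw [hu]; exact h2⟩

/-- The contribution of a single pair of distinct vertices. -/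
lemma pair_sum (n k r : ℕ) (hk : 2 ≤ k) (hkn : k ≤ n) (p : ℝ)
    (u v : Fin n) (huv : u ≠ v) :
    ∑ E : Finset (Finset (Fin n)), hweight n k p E *
        (if hstar E u = hstar E v ∧ (hstar E u).card = r then (1 : ℝ) else 0)
      = (((n - 2).choose (k - 2)).choose r : ℝ) * p ^ r *
        (1 - p) ^ (2 * (n - 2).choose (k - 1) + (n - 2).choose (k - 2) - r) := by
  classical
  set Ω := kSets n k with hΩdef
  set T := Ω.filter (fun e => u ∈ e ∨ v ∈ e) with hTdef
  set A := Ω.filter (fun e => u ∈ e ∧ v ∈ e) with hAdef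
  set Q : Finset (Finset (Fin n)) → Prop :=
    fun S => (∀ e ∈ S, u ∈ e ∧ v ∈ e) ∧ S.card = r with hQdef
  -- Step 1: rewrite the summand in the form needed by `key`
  have step1 : ∀ E : Finset (Finset (Fin n)),
      hweight n k p E * (if hstar E u = hstar E v ∧ (hstar E u).card = r then (1 : ℝ) else 0)
      = (if E ⊆ Ω then p ^ E.card * (1 - p) ^ (Ω.card - E.card) else 0) *
          (if Q (E ∩ T) then (1 : ℝ) else 0) := by
    intro E
    unfold hweight
    by_cases hE : E ⊆ Ω
    · rw [if_pos hE]
      congr 1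
      have hET : E ∩ T = E.filter (fun e => u ∈ e ∨ v ∈ e) := by
        ext e
        simp only [hTdef, Finset.mem_inter, Finset.mem_filter]
        constructor
        · rintro ⟨he, _, h⟩; exact ⟨he, h⟩
        · rintro ⟨he, h⟩; exact ⟨he, hE he, h⟩
      rw [hET]
      exact if_congr (cond_iff E u v r) rfl rfl
    · rw [if_neg hE, zero_mul, zero_mul]
  rw [Finset.sum_congr rfl (fun E _ => step1 E),
    key p Ω T (Finset.filter_subset _ _) Q]
  -- Step 2: identify the index set
  have step2 : T.powerset.filter Q = A.powersetCard r := by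
    ext S
    simp only [Finset.mem_filter, Finset.mem_powerset, Finset.mem_powersetCard, hQdef]
    constructor
    · rintro ⟨hST, hall, hcard⟩
      refine ⟨fun e he => ?_, hcard⟩
      have h1 := hST he
      rw [hTdef, Finset.mem_filter] at h1
      rw [hAdef, Finset.mem_filter]
      exact ⟨h1.1, hall e he⟩
    · rintro ⟨hSA, hcard⟩
      refine ⟨fun e he => ?_, fun e he => ?_, hcard⟩
      · have h1 := hSA he
        rw [hAdef, Finset.mem_filter] at h1
        rw [hTdef, Finset.mem_filter]
        exact ⟨h1.1, Or.inl h1.2.1⟩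
      · have h1 := hSA he
        rw [hAdef, Finset.mem_filter] at h1
        exact h1.2
  rw [step2]
  -- Step 3: the cardinalities
  have hcard2 : ({u, v} : Finset (Fin n)).card = 2 := Finset.card_pair huv
  have hA : A.card = (n - 2).choose (k - 2) := by
    have hcnt := count n k {u, v} ∅ (Finset.disjoint_empty_right _) (by rw [hcard2]; exact hk)
    rw [hcard2, Finset.card_empty] at hcnt
    simp only [Nat.sub_zero] at hcnt
    rw [hAdef, hΩdef]
    unfold kSets
    rw [← hcnt]
    congr 1
    apply Finset.filter_congr
    intro e _
    simp [Finset.insert_subset_iff]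
  have hpascal : (n - 1).choose (k - 1) = (n - 2).choose (k - 2) + (n - 2).choose (k - 1) := by
    obtain ⟨m, rfl⟩ : ∃ m, n = m + 2 := ⟨n - 2, by omega⟩
    obtain ⟨j, rfl⟩ : ∃ j, k = j + 2 := ⟨k - 2, by omega⟩
    simp [Nat.choose_succ_succ]
  have hu1 : (Ω.filter (fun e => u ∈ e)).card = (n - 1).choose (k - 1) := by
    have hcnt := count n k {u} ∅ (Finset.disjoint_empty_right _)
      (by rw [Finset.card_singleton]; omega)
    rw [Finset.card_singleton, Finset.card_empty] at hcnt
    simp only [Nat.sub_zero] at hcnt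
    rw [hΩdef]
    unfold kSets
    rw [← hcnt]
    congr 1
    apply Finset.filter_congr
    intro e _
    simp
  have hv1 : (Ω.filter (fun e => v ∈ e)).card = (n - 1).choose (k - 1) := by
    have hcnt := count n k {v} ∅ (Finset.disjoint_empty_right _)
      (by rw [Finset.card_singleton]; omega)
    rw [Finset.card_singleton, Finset.card_empty] at hcnt
    simp only [Nat.sub_zero] at hcnt
    rw [hΩdef]
    unfold kSets
    rw [← hcnt]
    congr 1
    apply Finset.filter_congr
    intro e _
    simp
  have hT : T.card = 2 * (n - 2).choose (k - 1) + (n - 2).choose (k - 2) := by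
    have hunion : T = Ω.filter (fun e => u ∈ e) ∪ Ω.filter (fun e => v ∈ e) := by
      rw [hTdef, Finset.filter_or]
    have hinter : Ω.filter (fun e => u ∈ e) ∩ Ω.filter (fun e => v ∈ e) = A := by
      rw [hAdef, Finset.filter_and]
    have hcui := Finset.card_union_add_card_inter
      (Ω.filter (fun e => u ∈ e)) (Ω.filter (fun e => v ∈ e))
    rw [hinter, hu1, hv1, hA, ← hunion] at hcui
    omega
  -- Step 4: evaluate the sum
  have step4 : ∀ S ∈ A.powersetCard r,
      p ^ S.card * (1 - p) ^ (T.card - S.card) = p ^ r * (1 - p) ^ (T.card - r) := by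
    intro S hS
    rw [(Finset.mem_powersetCard.mp hS).2]
  rw [Finset.sum_congr rfl step4, Finset.sum_const, Finset.card_powersetCard, hA, hT,
    nsmul_eq_mul]
  ring

/-- In `H(n,k,p)`, the expected number of star-collisions of support size `r` equals
`C(n,2) C(C(n-2,k-2), r) p^r (1-p)^{2 C(n-2,k-1) + C(n-2,k-2) - r}`. -/
theorem stmt9 (n k r : ℕ) (hk : 2 ≤ k) (hkn : k ≤ n)
    (hr : r ≤ (n - 2).choose (k - 2))
    (p : ℝ) (hp0 : 0 < p) (hp1 : p < 1) :
    hexp n k p (fun E => (Xr n r E : ℝ))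
      = (n.choose 2 : ℝ) * (((n - 2).choose (k - 2)).choose r : ℝ) * p ^ r *
        (1 - p) ^ (2 * (n - 2).choose (k - 1) + (n - 2).choose (k - 2) - r) := by
  classical
  unfold hexp Xr
  have hXr : ∀ E : Finset (Finset (Fin n)),
      ((((Finset.univ : Finset (Fin n)).powersetCard 2).filter
        (fun P => (∀ u ∈ P, ∀ v ∈ P, hstar E u = hstar E v) ∧
          ∀ u ∈ P, (hstar E u).card = r)).card : ℝ)
      = ∑ P ∈ (Finset.univ : Finset (Fin n)).powersetCard 2,
          (if (∀ u ∈ P, ∀ v ∈ P, hstar E u = hstar E v) ∧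
            ∀ u ∈ P, (hstar E u).card = r then (1 : ℝ) else 0) := by
    intro E
    rw [Finset.card_filter]
    push_cast
    rfl
  calc ∑ E : Finset (Finset (Fin n)), hweight n k p E *
        ((((Finset.univ : Finset (Fin n)).powersetCard 2).filter
          (fun P => (∀ u ∈ P, ∀ v ∈ P, hstar E u = hstar E v) ∧
            ∀ u ∈ P, (hstar E u).card = r)).card : ℝ)
      = ∑ P ∈ (Finset.univ : Finset (Fin n)).powersetCard 2,
          ∑ E : Finset (Finset (Fin n)), hweight n k p E *
            (if (∀ u ∈ P, ∀ v ∈ P, hstar E u = hstar E v) ∧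
              ∀ u ∈ P, (hstar E u).card = r then (1 : ℝ) else 0) := by
        rw [Finset.sum_comm]
        refine Finset.sum_congr rfl fun E _ => ?_
        rw [hXr E, Finset.mul_sum]
    _ = ∑ _P ∈ (Finset.univ : Finset (Fin n)).powersetCard 2,
          (((n - 2).choose (k - 2)).choose r : ℝ) * p ^ r *
            (1 - p) ^ (2 * (n - 2).choose (k - 1) + (n - 2).choose (k - 2) - r) := by
        refine Finset.sum_congr rfl fun P hP => ?_
        rw [Finset.mem_powersetCard] at hP
        obtain ⟨x, y, hxy, hPxy⟩ := Finset.card_eq_two.mp hP.2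
        have hiff : ∀ E : Finset (Finset (Fin n)),
            ((∀ u ∈ P, ∀ v ∈ P, hstar E u = hstar E v) ∧
              ∀ u ∈ P, (hstar E u).card = r)
            ↔ (hstar E x = hstar E y ∧ (hstar E x).card = r) := by
          intro E
          subst hPxy
          simp only [Finset.mem_insert, Finset.mem_singleton]
          constructor
          · rintro ⟨h1, h2⟩
            exact ⟨h1 x (Or.inl rfl) y (Or.inr rfl), h2 x (Or.inl rfl)⟩
          · rintro ⟨h1, h2⟩
            refine ⟨?_, ?_⟩
            · rintro a (rfl | rfl) b (rfl | rfl)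
              · rfl
              · exact h1
              · exact h1.symm
              · rfl
            · rintro a (rfl | rfl)
              · exact h2
              · rw [← h1]; exact h2
        rw [Finset.sum_congr rfl (fun E _ => by rw [if_congr (hiff E) rfl rfl])]
        exact pair_sum n k r hk hkn p x y hxy
    _ = (n.choose 2 : ℝ) * (((n - 2).choose (k - 2)).choose r : ℝ) * p ^ r *
        (1 - p) ^ (2 * (n - 2).choose (k - 1) + (n - 2).choose (k - 2) - r) := by
        rw [Finset.sum_const, Finset.card_powersetCard, Finset.card_univ, Fintype.card_fin,
          nsmul_eq_mul]
        ring
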